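/- The equivalent bilinear form statement: for the bijection σ on F_2^m defined in context, for any nonzero i ∈ F_2^m and any j₁, j₂ with j₁ + j₂ = i, the inner products satisfy ⟨σ(i), j₁⟩ + ⟨σ(i), j₂⟩ = 1 in F_2, i.e., ⟨σ(i), i⟩ = 1 for all nonzero i. -/
import Mathlib


/-- `σ` as in the construction. -/
def sigmaPerm {m : ℕ} (ω : Fin m → ZMod 2) : Fin m → ZMod 2 :=
  if h : ω = 0 then 0
  else
    let k := (Finset.univ.filter fun s => ω s ≠ 0).max' (by
      obtain ⟨s, hs⟩ : ∃ s, ω s ≠ 0 := by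
        by_contra hc; push_neg at hc; exact h (funext fun s => hc s)
      exact ⟨s, Finset.mem_filter.mpr ⟨Finset.mem_univ s, hs⟩⟩)
    fun s => if s < k then 1 - ω s else if s = k then 1 else 0

/-- The standard bilinear form `⟨ω,ν⟩ = Σ_s ω_s ν_s` on `F_2^m`. -/
def bilin {m : ℕ} (ω ν : Fin m → ZMod 2) : ZMod 2 := ∑ s, ω s * ν s

lemma bilin_add {m : ℕ} (ω ν₁ ν₂ : Fin m → ZMod 2) :
    bilin ω (ν₁ + ν₂) = bilin ω ν₁ + bilin ω ν₂ := by
  simp [bilin, mul_add, Finset.sum_add_distrib]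

/-- For nonzero `i`: `⟨σ(i), j₁⟩ + ⟨σ(i), j₂⟩ = 1` whenever `j₁ + j₂ = i`;
equivalently `⟨σ(i), i⟩ = 1`. -/
theorem bilin_sigma_eq_one (m : ℕ) (i : Fin m → ZMod 2) (hi : i ≠ 0) :
    (∀ j₁ j₂ : Fin m → ZMod 2, j₁ + j₂ = i →
      bilin (sigmaPerm i) j₁ + bilin (sigmaPerm i) j₂ = 1) ∧
    bilin (sigmaPerm i) i = 1 := by
  have key : bilin (sigmaPerm i) i = 1 := by
    unfold sigmaPerm
    rw [dif_neg hi]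
    set k := (Finset.univ.filter fun s => i s ≠ 0).max' _ with hk
    have hkmem : k ∈ Finset.univ.filter fun s => i s ≠ 0 := Finset.max'_mem _ _
    have hik : i k ≠ 0 := (Finset.mem_filter.mp hkmem).2
    have hik1 : i k = 1 := by
      have : ∀ x : ZMod 2, x ≠ 0 → x = 1 := by decide
      exact this _ hik
    show (∑ s, (if s < k then 1 - i s else if s = k then 1 else 0) * i s) = 1
    rw [Finset.sum_eq_single k]
    · simp [hik1]
    · intro s _ hs
      rcases lt_trichotomy s k with h | h | h
      · rw [if_pos h]
        have : ∀ x : ZMod 2, (1 - x) * x = 0 := by decide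
        exact this (i s)
      · exact absurd h hs
      · rw [if_neg (not_lt_of_gt h), if_neg hs, zero_mul]
    · intro h; exact absurd (Finset.mem_univ k) h
  refine ⟨fun j₁ j₂ hj => ?_, key⟩
  rw [← bilin_add, hj, key]
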